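/- For t > 0, the characteristic function of the measure μ_t with density ρ_t(u) = t·exp(−(u−t)²/(2u))/√(2πu³) on (0,∞) is φ_t(x) = ∫_0^∞ e^{iux} ρ_t(u) du = exp(t − t√(1−2xi)), where the square root is the principal branch. -/

import Mathlib

open Real MeasureTheory Set Filter



lemma cube_le_exp {x : ℝ} (hx : 0 ≤ x) : x ^ 3 / 6 ≤ Real.exp x := by
  have h := Real.pow_div_factorial_le_exp (x := x) hx 3
  norm_num [Nat.factorial] at h
  exact h

lemma exp_neg_le {x : ℝ} (hx : 0 < x) : Real.exp (-x) ≤ 6 / x ^ 3 := by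
  rw [Real.exp_neg]
  have h1 : x^3/6 ≤ Real.exp x := cube_le_exp hx.le
  have h2 : (0:ℝ) < x^3/6 := by positivity
  calc (Real.exp x)⁻¹ ≤ (x^3/6)⁻¹ := inv_anti₀ h2 h1
    _ = 6 / x^3 := by field_simp

/-- master pointwise bound -/
lemma master_bound (b ε : ℝ) (hb : 0 < b) (hε : 0 < ε) (k : ℕ) (hk : k ≤ 1) {u : ℝ}
    (hu : 0 < u) :
    u ^ k * Real.exp (-(ε * u + b / u)) / (u * Real.sqrt u)
      ≤ 6 / b ^ 3 * (48 / ε ^ 3 + 1) * Real.exp (-(ε / 2) * u) := by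
  have hsu : 0 < Real.sqrt u := Real.sqrt_pos.mpr hu
  -- exp (-(εu+b/u)) = exp(-εu) * exp(-(b/u))
  have e1 : Real.exp (-(ε * u + b / u)) = Real.exp (-(ε*u)) * Real.exp (-(b/u)) := by
    rw [← Real.exp_add]; ring_nf
  -- exp(-(b/u)) ≤ 6 u³ / b³
  have e2 : Real.exp (-(b/u)) ≤ 6 * u^3 / b^3 := by
    have := exp_neg_le (x := b/u) (by positivity)
    calc Real.exp (-(b/u)) ≤ 6/(b/u)^3 := this
      _ = 6 * u^3/b^3 := by rw [div_pow]; field_simp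
  -- u^(k+2) / sqrt u ≤ u³ + 1
  have e3 : u ^ k * u ^ 3 / (u * Real.sqrt u) ≤ u ^ 3 + 1 := by
    have hrw : u ^ k * u ^ 3 / (u * Real.sqrt u) = u ^ (k+2) / Real.sqrt u := by
      rw [pow_add]; field_simp
    rw [hrw, div_le_iff₀ hsu]
    rcases le_or_gt u 1 with h1 | h1
    · have : u ^ (k+2) ≤ u^2 := by
        apply pow_le_pow_of_le_one hu.le h1; omega
      have h2 : u^2 ≤ Real.sqrt u := by
        have hs1 : Real.sqrt u ≤ 1 := by
          rw [show (1:ℝ) = Real.sqrt 1 by simp]; exact Real.sqrt_le_sqrt h1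
        nlinarith [Real.sq_sqrt hu.le, hsu]
      nlinarith [pow_nonneg hu.le 3]
    · have h2 : (1:ℝ) ≤ Real.sqrt u := by
        rw [show (1:ℝ) = Real.sqrt 1 by simp]; exact Real.sqrt_le_sqrt h1.le
      have : u ^ (k+2) ≤ u ^ 3 := by
        apply pow_le_pow_right₀ h1.le; omega
      nlinarith [pow_nonneg hu.le 3]
  -- u³ exp(-(ε/2)u) ≤ 48/ε³
  have e4 : u ^ 3 * Real.exp (-(ε/2) * u) ≤ 48 / ε ^ 3 := by
    have := exp_neg_le (x := ε/2*u) (by positivity)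
    have h48 : 6/(ε/2*u)^3 = 48/(ε^3 * u^3) := by
      field_simp; ring
    rw [show -(ε/2)*u = -(ε/2*u) by ring]
    calc u^3 * Real.exp (-(ε/2*u)) ≤ u^3 * (48/(ε^3*u^3)) := by
          rw [← h48]; exact mul_le_mul_of_nonneg_left this (by positivity)
      _ = 48/ε^3 := by field_simp
  -- combine
  have key : u ^ k * Real.exp (-(ε * u + b / u)) / (u * Real.sqrt u)
      ≤ (6/b^3) * ((u^3+1) * Real.exp (-(ε*u))) := by
    rw [e1]
    have : u ^ k * (Real.exp (-(ε*u)) * Real.exp (-(b/u))) / (u * Real.sqrt u)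
        ≤ u ^ k * (Real.exp (-(ε*u)) * (6*u^3/b^3)) / (u * Real.sqrt u) := by
      apply div_le_div_of_nonneg_right ?_ (by positivity)
      exact mul_le_mul_of_nonneg_left (mul_le_mul_of_nonneg_left e2 (Real.exp_nonneg _)) (by positivity)
    calc u ^ k * (Real.exp (-(ε*u)) * Real.exp (-(b/u))) / (u * Real.sqrt u)
        ≤ u ^ k * (Real.exp (-(ε*u)) * (6*u^3/b^3)) / (u * Real.sqrt u) := this
      _ = (6/b^3) * Real.exp (-(ε*u)) * (u^k * u^3 / (u * Real.sqrt u)) := by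
          field_simp
      _ ≤ (6/b^3) * Real.exp (-(ε*u)) * (u^3+1) := by
          apply mul_le_mul_of_nonneg_left e3 (by positivity)
      _ = (6/b^3) * ((u^3+1) * Real.exp (-(ε*u))) := by ring
  calc u ^ k * Real.exp (-(ε * u + b / u)) / (u * Real.sqrt u)
      ≤ (6/b^3) * ((u^3+1) * Real.exp (-(ε*u))) := key
    _ ≤ (6/b^3) * ((48/ε^3 + 1) * Real.exp (-(ε/2)*u)) := by
        apply mul_le_mul_of_nonneg_left ?_ (by positivity)
        have hsplit : Real.exp (-(ε*u)) = Real.exp (-(ε/2)*u) * Real.exp (-(ε/2)*u) := by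
          rw [← Real.exp_add]; ring_nf
        rw [hsplit]
        have hle1 : Real.exp (-(ε/2)*u) ≤ 1 := by
          apply Real.exp_le_one_iff.mpr; nlinarith
        nlinarith [Real.exp_pos (-(ε/2)*u), e4, Real.exp_nonneg (-(ε/2)*u)]
    _ = 6 / b ^ 3 * (48 / ε ^ 3 + 1) * Real.exp (-(ε / 2) * u) := by ring

section
variable (a b : ℝ)

/-- continuity of the integrand on Ioi 0 -/
lemma contOn_aux (k : ℕ) (ha : True) :
    ContinuousOn (fun u : ℝ => u ^ k * Real.exp (-(a * u + b / u)) / (u * Real.sqrt u))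
      (Ioi (0:ℝ)) := by
  apply ContinuousOn.div
  · apply ContinuousOn.mul (continuousOn_pow k)
    apply Real.continuous_exp.comp_continuousOn
    apply ContinuousOn.neg
    apply ContinuousOn.add (by fun_prop)
    exact continuousOn_const.div continuousOn_id (fun u hu => ne_of_gt hu)
  · exact continuousOn_id.mul (Real.continuous_sqrt.continuousOn)
  · intro u hu
    have hu : (0:ℝ) < u := hu
    positivity

lemma integrable_aux (ha : 0 < a) (hb : 0 < b) (k : ℕ) (hk : k ≤ 1) :
    IntegrableOn (fun u : ℝ => u ^ k * Real.exp (-(a * u + b / u)) / (u * Real.sqrt u))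
      (Ioi (0:ℝ)) := by
  have hmeas : AEStronglyMeasurable
      (fun u : ℝ => u ^ k * Real.exp (-(a * u + b / u)) / (u * Real.sqrt u))
      (volume.restrict (Ioi 0)) :=
    (contOn_aux a b k trivial).aestronglyMeasurable measurableSet_Ioi
  apply Integrable.mono' (g := fun u => 6 / b ^ 3 * (48 / a ^ 3 + 1) * Real.exp (-(a / 2) * u))
  · exact ((exp_neg_integrableOn_Ioi 0 (by positivity : (0:ℝ) < a/2)).const_mul _)
  · exact hmeas
  · rw [ae_restrict_iff' measurableSet_Ioi]
    filter_upwards with u hu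
    have hu : (0:ℝ) < u := hu
    rw [Real.norm_eq_abs, abs_of_nonneg (by positivity)]
    exact master_bound b a hb ha k hk hu
end


section
variable {a b : ℝ}

lemma integrableI' (ha : 0 < a) (hb : 0 < b)
    (H : IntegrableOn (fun u : ℝ => u ^ 0 * Real.exp (-(a * u + b / u)) / (u * Real.sqrt u)) (Ioi 0)) :
    IntegrableOn (fun u : ℝ => Real.exp (-(a * u + b / u)) / (u * Real.sqrt u)) (Ioi 0) := by
  apply IntegrableOn.congr_fun H ?_ measurableSet_Ioi
  intro u hu
  simp

lemma integrableJ' (ha : 0 < a) (hb : 0 < b)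
    (H : IntegrableOn (fun u : ℝ => u ^ 1 * Real.exp (-(a * u + b / u)) / (u * Real.sqrt u)) (Ioi 0)) :
    IntegrableOn (fun u : ℝ => Real.exp (-(a * u + b / u)) / Real.sqrt u) (Ioi 0) := by
  apply IntegrableOn.congr_fun H ?_ measurableSet_Ioi
  intro u hu
  have hu : (0:ℝ) < u := hu
  simp only [pow_one]
  rw [mul_div_mul_left _ _ (ne_of_gt hu)]

lemma partA' (ha : 0 < a) (hb : 0 < b)
    (h1 : (∫ u in Ioi (0:ℝ), Real.exp (-(a * u + b / u)) / (u * Real.sqrt u))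
      = (Real.sqrt a / Real.sqrt b) * ∫ u in Ioi (0:ℝ), Real.exp (-(a * u + b / u)) / Real.sqrt u)
    (h2 : Real.sqrt π = Real.exp (2 * Real.sqrt a * Real.sqrt b) *
      (Real.sqrt a / 2 * (∫ u in Ioi (0:ℝ), Real.exp (-(a * u + b / u)) / Real.sqrt u)
       + Real.sqrt b / 2 * (∫ u in Ioi (0:ℝ), Real.exp (-(a * u + b / u)) / (u * Real.sqrt u)))) :
    (∫ u in Ioi (0:ℝ), Real.exp (-(a * u + b / u)) / (u * Real.sqrt u))
      = Real.sqrt π / Real.sqrt b * Real.exp (-(2 * Real.sqrt a * Real.sqrt b)) := by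
  have hsa : (0:ℝ) < Real.sqrt a := Real.sqrt_pos.mpr ha
  have hsb : (0:ℝ) < Real.sqrt b := Real.sqrt_pos.mpr hb
  have he : (0:ℝ) < Real.exp (2 * Real.sqrt a * Real.sqrt b) := Real.exp_pos _
  set I := ∫ u in Ioi (0:ℝ), Real.exp (-(a * u + b / u)) / (u * Real.sqrt u) with hI
  set J := ∫ u in Ioi (0:ℝ), Real.exp (-(a * u + b / u)) / Real.sqrt u with hJ
  have hJI : J = Real.sqrt b / Real.sqrt a * I := by
    rw [h1]; field_simp
  rw [hJI] at h2
  have h3 : Real.sqrt π = Real.exp (2 * Real.sqrt a * Real.sqrt b) * (Real.sqrt b * I) := by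
    rw [h2]; field_simp; ring
  rw [Real.exp_neg]
  field_simp
  rw [h3]; ring_nf
end

lemma integrableI {a b : ℝ} (ha : 0 < a) (hb : 0 < b) :
    IntegrableOn (fun u : ℝ => Real.exp (-(a * u + b / u)) / (u * Real.sqrt u)) (Ioi 0) :=
  integrableI' ha hb (integrable_aux a b ha hb 0 (by norm_num))

lemma integrableJ {a b : ℝ} (ha : 0 < a) (hb : 0 < b) :
    IntegrableOn (fun u : ℝ => Real.exp (-(a * u + b / u)) / Real.sqrt u) (Ioi 0) :=
  integrableJ' ha hb (integrable_aux a b ha hb 1 le_rfl)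

section
variable {a b : ℝ}

lemma step1  (ha : 0 < a) (hb : 0 < b) :
    (∫ u in Ioi (0:ℝ), Real.exp (-(a * u + b / u)) / (u * Real.sqrt u))
      = (Real.sqrt a / Real.sqrt b) * ∫ u in Ioi (0:ℝ), Real.exp (-(a * u + b / u)) / Real.sqrt u := by
  have himg : (fun u : ℝ => b / (a * u)) '' (Ioi 0) = Ioi 0 := by
    ext y
    simp only [mem_image, mem_Ioi]
    constructor
    · rintro ⟨u, hu, rfl⟩; positivity
    · intro hy; exact ⟨b / (a * y), by positivity, by field_simp⟩
  have hderiv : ∀ u ∈ Ioi (0:ℝ), HasDerivWithinAt (fun u : ℝ => b / (a * u))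
      (-(b / a) * (u ^ 2)⁻¹) (Ioi 0) u := by
    intro u hu
    have hu' : (u:ℝ) ≠ 0 := ne_of_gt hu
    have h1 : HasDerivAt (fun u : ℝ => (b / a) * u⁻¹) ((b/a) * (-(u^2)⁻¹)) u :=
      (hasDerivAt_inv hu').const_mul _
    have h2 : (fun u : ℝ => (b/a) * u⁻¹) = fun u : ℝ => b / (a * u) := by
      funext v; by_cases hv : v = 0 <;> field_simp
    rw [h2] at h1
    exact (show -(b / a) * (u ^ 2)⁻¹ = b / a * -(u ^ 2)⁻¹ by ring) ▸ h1.hasDerivWithinAt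
  have hinj : InjOn (fun u : ℝ => b / (a * u)) (Ioi 0) := by
    intro u hu v hv h
    simp only at h
    have hu' : (u:ℝ) ≠ 0 := ne_of_gt hu
    have hv' : (v:ℝ) ≠ 0 := ne_of_gt hv
    field_simp at h
    exact h.symm
  have key := integral_image_eq_integral_abs_deriv_smul measurableSet_Ioi hderiv hinj
    (fun u : ℝ => Real.exp (-(a * u + b / u)) / (u * Real.sqrt u))
  rw [himg] at key
  rw [key]
  rw [← integral_const_mul]
  apply setIntegral_congr_fun measurableSet_Ioi
  intro u hu
  have hu : (0:ℝ) < u := hu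
  have hsu : (0:ℝ) < Real.sqrt u := Real.sqrt_pos.mpr hu
  have hsa : (0:ℝ) < Real.sqrt a := Real.sqrt_pos.mpr ha
  have hsb : (0:ℝ) < Real.sqrt b := Real.sqrt_pos.mpr hb
  have harg : -(a * (b / (a * u)) + b / (b / (a * u))) = -(a * u + b / u) := by
    field_simp; ring
  have hsq : Real.sqrt (b / (a * u)) = Real.sqrt b / (Real.sqrt a * Real.sqrt u) := by
    rw [Real.sqrt_div hb.le, Real.sqrt_mul ha.le]
  simp only [smul_eq_mul]
  rw [harg, hsq]
  have hu2 : u = Real.sqrt u * Real.sqrt u := (Real.mul_self_sqrt hu.le).symm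
  have habs : |(-(b/a)) * ((u:ℝ)^2)⁻¹| = (b/a)*((u:ℝ)^2)⁻¹ := by
    rw [abs_mul, abs_neg, abs_of_pos (by positivity), abs_of_pos (by positivity)]
  rw [habs]
  have h2 : Real.sqrt a * Real.sqrt a = a := Real.mul_self_sqrt ha.le
  have h3 : Real.sqrt b * Real.sqrt b = b := Real.mul_self_sqrt hb.le
  generalize Real.exp (-(a*u+b/u)) = E
  rw [← h2, ← h3, hu2]
  field_simp
  rw [Real.sqrt_sq hsu.le]
  ring


lemma phi_image  (ha : 0 < a) (hb : 0 < b) :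
    (fun u : ℝ => Real.sqrt a * Real.sqrt u - Real.sqrt b / Real.sqrt u) '' (Ioi 0) = univ := by
  have hsa : (0:ℝ) < Real.sqrt a := Real.sqrt_pos.mpr ha
  have hsb : (0:ℝ) < Real.sqrt b := Real.sqrt_pos.mpr hb
  apply eq_univ_of_forall
  intro w
  set D := Real.sqrt (w^2 + 4 * Real.sqrt a * Real.sqrt b) with hD
  have hD2 : D^2 = w^2 + 4 * Real.sqrt a * Real.sqrt b := Real.sq_sqrt (by positivity)
  have hDnn : 0 ≤ D := Real.sqrt_nonneg _
  have hwD : 0 < w + D := by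
    have h1 : w^2 < D^2 := by nlinarith
    have h2 : |w| < D := by nlinarith [sq_abs w, abs_nonneg w]
    linarith [neg_abs_le w]
  set s := (w + D) / (2 * Real.sqrt a) with hs
  have hspos : 0 < s := by positivity
  refine ⟨s^2, mem_Ioi.mpr (by positivity), ?_⟩
  simp only
  rw [Real.sqrt_sq hspos.le]
  have heq : Real.sqrt a * s^2 - Real.sqrt b = w * s := by
    rw [hs]
    field_simp
    nlinarith [hD2]
  field_simp
  linarith [heq]

lemma step2 (ha : 0 < a) (hb : 0 < b) :
    Real.sqrt π = Real.exp (2 * Real.sqrt a * Real.sqrt b) *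
      (Real.sqrt a / 2 * (∫ u in Ioi (0:ℝ), Real.exp (-(a * u + b / u)) / Real.sqrt u)
       + Real.sqrt b / 2 * (∫ u in Ioi (0:ℝ), Real.exp (-(a * u + b / u)) / (u * Real.sqrt u))) := by
  have hsa : (0:ℝ) < Real.sqrt a := Real.sqrt_pos.mpr ha
  have hsb : (0:ℝ) < Real.sqrt b := Real.sqrt_pos.mpr hb
  set φ : ℝ → ℝ := fun u => Real.sqrt a * Real.sqrt u - Real.sqrt b / Real.sqrt u with hφ
  set φ' : ℝ → ℝ := fun u => Real.sqrt a / (2 * Real.sqrt u) + Real.sqrt b / (2 * (u * Real.sqrt u))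
    with hφ'
  have hderiv : ∀ u ∈ Ioi (0:ℝ), HasDerivAt φ (φ' u) u := by
    intro u hu
    have hu : (0:ℝ) < u := hu
    have hsu : (0:ℝ) < Real.sqrt u := Real.sqrt_pos.mpr hu
    have huu : Real.sqrt u * Real.sqrt u = u := Real.mul_self_sqrt hu.le
    have h1 : HasDerivAt Real.sqrt (1 / (2 * Real.sqrt u)) u := Real.hasDerivAt_sqrt (ne_of_gt hu)
    have h2 : HasDerivAt (fun u => Real.sqrt a * Real.sqrt u)
        (Real.sqrt a * (1 / (2 * Real.sqrt u))) u := h1.const_mul _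
    have h3 : HasDerivAt (fun u : ℝ => Real.sqrt b * (Real.sqrt u)⁻¹)
        (Real.sqrt b * (-(1 / (2 * Real.sqrt u)) / (Real.sqrt u)^2)) u :=
      (h1.inv (ne_of_gt hsu)).const_mul _
    have h5 := h2.sub h3
    have hgoal : Real.sqrt a * (1 / (2 * Real.sqrt u))
        - Real.sqrt b * (-(1 / (2 * Real.sqrt u)) / (Real.sqrt u)^2) = φ' u := by
      rw [hφ']
      simp only
      rw [← huu]
      field_simp
      rw [Real.sqrt_sq hsu.le]
      ring
    have h6 : (fun u : ℝ => Real.sqrt a * Real.sqrt u - Real.sqrt b * (Real.sqrt u)⁻¹) = φ := by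
      funext v
      rw [hφ]
      simp only [div_eq_mul_inv]
    rw [← h6, ← hgoal]
    exact h5
  have hderiv' : ∀ u ∈ Ioi (0:ℝ), HasDerivWithinAt φ (φ' u) (Ioi 0) u :=
    fun u hu => (hderiv u hu).hasDerivWithinAt
  have hcont : ContinuousOn φ (Ioi 0) := by
    rw [hφ]
    apply ContinuousOn.sub
    · exact continuousOn_const.mul Real.continuous_sqrt.continuousOn
    · exact continuousOn_const.div Real.continuous_sqrt.continuousOn
        (fun u hu => ne_of_gt (Real.sqrt_pos.mpr hu))
  have hmono : StrictMonoOn φ (Ioi 0) := by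
    apply strictMonoOn_of_deriv_pos (convex_Ioi 0) hcont
    intro u hu
    rw [interior_Ioi] at hu
    have hu' : (0:ℝ) < u := hu
    have hsu : (0:ℝ) < Real.sqrt u := Real.sqrt_pos.mpr hu'
    rw [(hderiv u hu).deriv]
    rw [hφ']
    positivity
  have hinj : InjOn φ (Ioi 0) := hmono.injOn
  have key := integral_image_eq_integral_abs_deriv_smul measurableSet_Ioi hderiv' hinj
    (fun w : ℝ => Real.exp (-(w^2)))
  rw [phi_image ha hb] at key
  have hgauss : (∫ w in (univ : Set ℝ), Real.exp (-(w^2))) = Real.sqrt π := by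
    rw [Measure.restrict_univ]
    simpa using integral_gaussian 1
  rw [hgauss] at key
  have e2 := Real.exp_pos (2 * Real.sqrt a * Real.sqrt b)
  set e := Real.exp (2 * Real.sqrt a * Real.sqrt b) with he
  rw [key, mul_add, ← mul_assoc, ← mul_assoc, ← integral_const_mul, ← integral_const_mul,
    ← integral_add (((integrableJ ha hb).const_mul _)) (((integrableI ha hb).const_mul _))]
  apply setIntegral_congr_fun measurableSet_Ioi
  intro u hu
  have hu : (0:ℝ) < u := hu
  have hsu : (0:ℝ) < Real.sqrt u := Real.sqrt_pos.mpr hu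
  have huu : Real.sqrt u * Real.sqrt u = u := Real.mul_self_sqrt hu.le
  have hsq : (φ u)^2 = a * u + b / u - 2 * Real.sqrt a * Real.sqrt b := by
    rw [hφ]
    simp only
    have expand : (Real.sqrt a * Real.sqrt u - Real.sqrt b / Real.sqrt u)^2
        = (Real.sqrt a * Real.sqrt u)^2 - 2 * ((Real.sqrt a * Real.sqrt u) * (Real.sqrt b / Real.sqrt u))
          + (Real.sqrt b / Real.sqrt u)^2 := by ring
    rw [expand, mul_pow, div_pow, Real.sq_sqrt ha.le, Real.sq_sqrt hb.le, Real.sq_sqrt hu.le]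
    have hcross : Real.sqrt a * Real.sqrt u * (Real.sqrt b / Real.sqrt u)
        = Real.sqrt a * Real.sqrt b := by
      field_simp
    rw [hcross]
    ring
  have habs : |φ' u| = φ' u := abs_of_pos (by rw [hφ']; positivity)
  simp only [smul_eq_mul]
  rw [habs, hsq]
  have hexp : Real.exp (-(a * u + b / u - 2 * Real.sqrt a * Real.sqrt b))
      = e * Real.exp (-(a * u + b / u)) := by
    rw [he, ← Real.exp_add]; ring_nf
  rw [hexp, hφ']
  simp only
  field_simp
end



noncomputable def ρ (t u : ℝ) : ℝ :=
  t * Real.exp (-(u - t) ^ 2 / (2 * u)) / Real.sqrt (2 * Real.pi * u ^ 3)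

lemma rho_pos_eq (t : ℝ) (ht : 0 < t) {u : ℝ} (hu : 0 < u) (s : ℝ) :
    Real.exp (s * u) * ρ t u
      = (t * Real.exp t / Real.sqrt (2 * π)) *
        (Real.exp (-((1/2 - s) * u + (t^2/2) / u)) / (u * Real.sqrt u)) := by
  have hsu : (0:ℝ) < Real.sqrt u := Real.sqrt_pos.mpr hu
  have h2π : (0:ℝ) < Real.sqrt (2*π) := Real.sqrt_pos.mpr (by positivity)
  have hden : Real.sqrt (2 * π * u ^ 3) = Real.sqrt (2*π) * (u * Real.sqrt u) := by
    rw [Real.sqrt_mul (by positivity) (u^3), show u^3 = u^2 * u by ring,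
      Real.sqrt_mul (sq_nonneg u), Real.sqrt_sq hu.le]
  have hexp : Real.exp (s*u) * Real.exp (-(u - t) ^ 2 / (2 * u))
      = Real.exp t * Real.exp (-((1/2 - s) * u + (t^2/2) / u)) := by
    rw [← Real.exp_add, ← Real.exp_add]
    congr 1
    field_simp
    ring
  rw [ρ, hden]
  rw [show Real.exp (s*u) * (t * Real.exp (-(u - t) ^ 2 / (2 * u)) / (Real.sqrt (2*π) * (u * Real.sqrt u)))
      = t / Real.sqrt (2*π) * ((Real.exp (s*u) * Real.exp (-(u-t)^2/(2*u))) / (u * Real.sqrt u)) from by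
    ring]
  rw [hexp]
  ring

lemma partA {a b : ℝ} (ha : 0 < a) (hb : 0 < b) :
    (∫ u in Ioi (0:ℝ), Real.exp (-(a * u + b / u)) / (u * Real.sqrt u))
      = Real.sqrt π / Real.sqrt b * Real.exp (-(2 * Real.sqrt a * Real.sqrt b)) :=
  partA' ha hb (step1 ha hb) (step2 ha hb)

lemma partB (t : ℝ) (ht : 0 < t) (s : ℝ) (hs : s < 1/2) :
    (∫ u in Ioi (0:ℝ), Real.exp (s * u) * ρ t u)
      = Real.exp (t - t * Real.sqrt (1 - 2 * s)) := by
  have ha : (0:ℝ) < 1/2 - s := by linarith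
  have hb : (0:ℝ) < t^2/2 := by positivity
  have h1 : (∫ u in Ioi (0:ℝ), Real.exp (s * u) * ρ t u)
      = (t * Real.exp t / Real.sqrt (2 * π)) *
        ∫ u in Ioi (0:ℝ), Real.exp (-((1/2 - s) * u + (t^2/2) / u)) / (u * Real.sqrt u) := by
    rw [← integral_const_mul]
    apply setIntegral_congr_fun measurableSet_Ioi
    intro u hu
    exact rho_pos_eq t ht hu s
  rw [h1, partA ha hb]
  -- now pure algebra
  have hsqrt2 : Real.sqrt 2 * Real.sqrt 2 = 2 := Real.mul_self_sqrt (by norm_num)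
  have hs2 : (0:ℝ) < Real.sqrt 2 := Real.sqrt_pos.mpr (by norm_num)
  have hsπ : (0:ℝ) < Real.sqrt π := Real.sqrt_pos.mpr Real.pi_pos
  have hsa : (0:ℝ) < Real.sqrt (1/2 - s) := Real.sqrt_pos.mpr ha
  have hb' : Real.sqrt (t^2/2) = t / Real.sqrt 2 := by
    rw [Real.sqrt_div (sq_nonneg t), Real.sqrt_sq ht.le]
  have h2π : Real.sqrt (2*π) = Real.sqrt 2 * Real.sqrt π := Real.sqrt_mul (by norm_num) π
  have h2a : Real.sqrt (1 - 2*s) = Real.sqrt 2 * Real.sqrt (1/2 - s) := by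
    rw [show (1 - 2*s : ℝ) = 2 * (1/2 - s) by ring, Real.sqrt_mul (by norm_num)]
  rw [hb', h2π, h2a]
  have harg : -(2 * Real.sqrt (1/2 - s) * (t / Real.sqrt 2))
      = -(t * (Real.sqrt 2 * Real.sqrt (1/2 - s))) := by
    field_simp
    rw [Real.sq_sqrt (by norm_num : (0:ℝ) ≤ 2)]
    ring
  rw [harg, show t - t * (Real.sqrt 2 * Real.sqrt (1/2-s))
      = t + -(t * (Real.sqrt 2 * Real.sqrt (1/2-s))) by ring, Real.exp_add]
  field_simp

open Complex in
lemma partB_c (t : ℝ) (ht : 0 < t) (s : ℝ) (hs : s < 1/2) :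
    (∫ u in Ioi (0:ℝ), Complex.exp (u * (s:ℂ)) * (ρ t u : ℂ))
      = Complex.exp (t - t * (1 - 2 * (s:ℂ)) ^ ((1:ℂ)/2)) := by
  have h1 : (∫ u in Ioi (0:ℝ), Complex.exp (u * (s:ℂ)) * (ρ t u : ℂ))
      = ((∫ u in Ioi (0:ℝ), Real.exp (s * u) * ρ t u : ℝ) : ℂ) := by
    have h0 : ∫ u in Ioi (0:ℝ), ((Real.exp (s * u) * ρ t u : ℝ) : ℂ)
        = ((∫ u in Ioi (0:ℝ), Real.exp (s * u) * ρ t u : ℝ) : ℂ) := integral_ofReal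
    rw [← h0]
    apply setIntegral_congr_fun measurableSet_Ioi
    intro u _
    simp only [Complex.ofReal_mul, ← Complex.ofReal_exp]
    push_cast
    ring_nf
  rw [h1, partB t ht s hs, Complex.ofReal_exp]
  congr 1
  have h2 : ((1 : ℂ) - 2 * (s:ℂ)) = ((1 - 2*s : ℝ) : ℂ) := by push_cast; ring
  have h3 : ((1 - 2*s : ℝ) : ℂ) ^ ((1:ℂ)/2) = ((Real.sqrt (1 - 2*s) : ℝ) : ℂ) := by
    rw [Real.sqrt_eq_rpow, Complex.ofReal_cpow (by linarith : (0:ℝ) ≤ 1 - 2*s) (1/2)]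
    norm_num
  rw [h2, h3]
  push_cast
  ring

lemma contOn_rho (t : ℝ) : ContinuousOn (ρ t) (Ioi 0) := by
  apply ContinuousOn.div
  · apply continuousOn_const.mul
    apply Real.continuous_exp.comp_continuousOn
    apply ContinuousOn.div (by fun_prop) (by fun_prop)
    intro u hu
    have : (0:ℝ) < u := hu
    positivity
  · exact (Real.continuous_sqrt.comp (by continuity)).continuousOn
  · intro u hu
    have : (0:ℝ) < u := hu
    have : (0:ℝ) < 2 * π * u ^ 3 := by positivity
    exact ne_of_gt (Real.sqrt_pos.mpr this)

lemma rho_nonneg (t : ℝ) (ht : 0 < t) (u : ℝ) : 0 ≤ ρ t u := by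
  rw [ρ]; positivity

lemma norm_cexp_rho (t : ℝ) (ht : 0 < t) (z : ℂ) (u : ℝ) (hu : 0 < u) :
    ‖Complex.exp (u * z) * (ρ t u : ℂ)‖ = Real.exp (z.re * u) * ρ t u := by
  rw [norm_mul, Complex.norm_exp, Complex.norm_real,
    Real.norm_eq_abs, abs_of_nonneg (rho_nonneg t ht u)]
  congr 2
  simp [Complex.mul_re, mul_comm]

lemma integrable_rho_exp (t : ℝ) (ht : 0 < t) (σ : ℝ) (hσ : σ < 1/2) (k : ℕ) (hk : k ≤ 1) :
    IntegrableOn (fun u : ℝ => u ^ k * (Real.exp (σ * u) * ρ t u)) (Ioi 0) := by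
  have ha : (0:ℝ) < 1/2 - σ := by linarith
  have hb : (0:ℝ) < t^2/2 := by positivity
  have H := (integrable_aux _ _ ha hb k hk).const_mul (t * Real.exp t / Real.sqrt (2*π))
  apply IntegrableOn.congr_fun H ?_ measurableSet_Ioi
  intro u hu
  have hu : (0:ℝ) < u := hu
  simp only
  rw [rho_pos_eq t ht hu σ]
  ring

lemma measF (t : ℝ) (z : ℂ) :
    AEStronglyMeasurable (fun u : ℝ => Complex.exp (u * z) * (ρ t u : ℂ))
      (volume.restrict (Ioi 0)) := by
  apply ContinuousOn.aestronglyMeasurable ?_ measurableSet_Ioi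
  apply ContinuousOn.mul
  · exact (Complex.continuous_exp.comp (Complex.continuous_ofReal.mul continuous_const)).continuousOn
  · exact Complex.continuous_ofReal.comp_continuousOn (contOn_rho t)

lemma F_diff (t : ℝ) (ht : 0 < t) {z₀ : ℂ} (hz : z₀.re < 1/2) :
    DifferentiableAt ℂ (fun z => ∫ u in Ioi (0:ℝ), Complex.exp (u * z) * (ρ t u : ℂ)) z₀ := by
  set ε := (1/2 - z₀.re)/2 with hε
  have hεpos : 0 < ε := by rw [hε]; linarith
  set σ' := z₀.re + ε with hσ'
  have hσ'lt : σ' < 1/2 := by rw [hσ', hε]; linarith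
  have key := hasDerivAt_integral_of_dominated_loc_of_deriv_le (μ := volume.restrict (Ioi 0))
    (F := fun z u => Complex.exp (u * z) * (ρ t u : ℂ))
    (F' := fun z u => (u:ℂ) * (Complex.exp (u * z) * (ρ t u : ℂ)))
    (x₀ := z₀) (bound := fun u => u * (Real.exp (σ' * u) * ρ t u))
    (Metric.ball_mem_nhds z₀ hεpos) (Filter.Eventually.of_forall (fun z => measF t z)) ?_ ?_ ?_ ?_ ?_
  · exact key.2.differentiableAt
  · -- integrable F z₀
    apply Integrable.mono' (g := fun u => u ^ 0 * (Real.exp (z₀.re * u) * ρ t u))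
      (integrable_rho_exp t ht z₀.re hz 0 (by norm_num)) (measF t z₀)
    rw [ae_restrict_iff' measurableSet_Ioi]
    filter_upwards with u hu
    rw [norm_cexp_rho t ht z₀ u hu]
    simp
  · -- F' meas
    apply AEStronglyMeasurable.mul ?_ (measF t z₀)
    exact (Complex.continuous_ofReal.aestronglyMeasurable)
  · -- bound
    rw [ae_restrict_iff' measurableSet_Ioi]
    filter_upwards with u hu
    intro z hzb
    have hu' : (0:ℝ) < u := hu
    rw [norm_mul, norm_cexp_rho t ht z u hu']
    rw [Complex.norm_real, Real.norm_eq_abs, abs_of_nonneg hu'.le]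
    have hre : z.re ≤ σ' := by
      have h2 : dist z z₀ < ε := Metric.mem_ball.mp hzb
      have h1 : |(z - z₀).re| ≤ dist z z₀ := by
        rw [Complex.dist_eq]; exact Complex.abs_re_le_norm _
      have h3 : z.re - z₀.re ≤ |(z - z₀).re| := by
        rw [Complex.sub_re]; exact le_abs_self _
      rw [hσ']; linarith
    apply mul_le_mul_of_nonneg_left ?_ hu'.le
    apply mul_le_mul_of_nonneg_right ?_ (rho_nonneg t ht u)
    exact Real.exp_le_exp.mpr (by nlinarith [hu'.le])
  · exact (integrable_rho_exp t ht σ' hσ'lt 1 le_rfl).congr_fun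
      (fun u hu => by simp only [pow_one]) measurableSet_Ioi
  · -- differentiability pointwise
    rw [ae_restrict_iff' measurableSet_Ioi]
    filter_upwards with u hu
    intro z hzb
    have h := (((hasDerivAt_id z).const_mul ((u:ℂ))).cexp).mul_const ((ρ t u : ℂ))
    simp only [id_eq] at h
    exact h.congr_deriv (by ring)

lemma G_diff (t : ℝ) {z : ℂ} (hz : z.re < 1/2) :
    DifferentiableAt ℂ (fun z : ℂ => Complex.exp ((t:ℂ) - t * (1 - 2*z) ^ ((1:ℂ)/2))) z := by
  have hslit : (1 - 2*z) ∈ Complex.slitPlane := by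
    rw [Complex.mem_slitPlane_iff]
    left
    simp only [Complex.sub_re, Complex.one_re, Complex.mul_re, Complex.re_ofNat,
      Complex.im_ofNat]
    nlinarith [hz]
  have hbase : DifferentiableAt ℂ (fun z : ℂ => 1 - 2*z) z := by fun_prop
  have hpow : DifferentiableAt ℂ (fun z : ℂ => (1 - 2*z) ^ ((1:ℂ)/2)) z :=
    hbase.cpow (differentiableAt_const _) hslit
  exact (((differentiableAt_const ((t:ℂ))).sub ((differentiableAt_const ((t:ℂ))).mul hpow))).cexp

theorem stmt_15 (t : ℝ) (ht : 0 < t) (x : ℝ) :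
    ∫ u in Set.Ioi (0 : ℝ), Complex.exp (u * x * Complex.I) * (ρ t u : ℂ)
      = Complex.exp (t - t * (1 - 2 * x * Complex.I) ^ ((1 : ℂ) / 2)) := by
  set U : Set ℂ := {z : ℂ | z.re < 1/2} with hU
  set F : ℂ → ℂ := fun z => ∫ u in Ioi (0:ℝ), Complex.exp (u * z) * (ρ t u : ℂ) with hF
  set G : ℂ → ℂ := fun z => Complex.exp ((t:ℂ) - t * (1 - 2*z) ^ ((1:ℂ)/2)) with hG
  have hUopen : IsOpen U := isOpen_lt Complex.continuous_re continuous_const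
  have hUconn : IsPreconnected U := (convex_halfSpace_re_lt (1/2)).isPreconnected
  have hFa : AnalyticOnNhd ℂ F U := by
    apply DifferentiableOn.analyticOnNhd ?_ hUopen
    intro z hz
    exact (F_diff t ht hz).differentiableWithinAt
  have hGa : AnalyticOnNhd ℂ G U := by
    apply DifferentiableOn.analyticOnNhd ?_ hUopen
    intro z hz
    exact (G_diff t hz).differentiableWithinAt
  have h0 : (0:ℂ) ∈ U := by simp [hU]
  have hfreq : ∃ᶠ z in nhdsWithin (0:ℂ) {(0:ℂ)}ᶜ, F z = G z := by
    apply mem_closure_ne_iff_frequently_within.mp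
    apply mem_closure_of_tendsto
      (f := fun n : ℕ => ((-(1:ℝ)/(n+1) : ℝ) : ℂ)) (b := atTop)
    · have h1 : Tendsto (fun n : ℕ => -(1:ℝ)/(n+1)) atTop (nhds 0) := by
        have := tendsto_one_div_add_atTop_nhds_zero_nat (𝕜 := ℝ)
        have h2 := this.neg
        simp only [neg_zero] at h2
        convert h2 using 2 with n
        ring
      have h3 := (Complex.continuous_ofReal.tendsto 0).comp h1
      simp only [Function.comp_def, Complex.ofReal_zero] at h3
      exact h3
    · filter_upwards with n
      have hpos : (0:ℝ) < (n:ℝ)+1 := by positivity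
      have hneg : -(1:ℝ)/(n+1) < 0 := by
        apply div_neg_of_neg_of_pos (by norm_num) hpos
      have hn : -(1:ℝ)/(n+1) < 1/2 := by linarith
      constructor
      · show F _ = G _
        rw [hF, hG]
        simpa using partB_c t ht (-(1:ℝ)/(n+1)) hn
      · simp only [mem_compl_iff, mem_singleton_iff, Complex.ofReal_eq_zero]
        intro h
        rw [h] at hneg
        norm_num at hneg
  have hEq : EqOn F G U :=
    hFa.eqOn_of_preconnected_of_frequently_eq hGa hUconn h0 hfreq
  have hx : ((x:ℂ) * Complex.I) ∈ U := by
    simp [hU, Complex.mul_I_re]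
  have := hEq hx
  rw [hF, hG] at this
  simp only at this
  calc ∫ u in Set.Ioi (0 : ℝ), Complex.exp (u * x * Complex.I) * (ρ t u : ℂ)
      = ∫ u in Ioi (0:ℝ), Complex.exp (u * ((x:ℂ) * Complex.I)) * (ρ t u : ℂ) := by
        apply setIntegral_congr_fun measurableSet_Ioi
        intro u _
        simp only [mul_assoc]
    _ = Complex.exp ((t:ℂ) - t * (1 - 2*((x:ℂ) * Complex.I)) ^ ((1:ℂ)/2)) := this
    _ = Complex.exp (t - t * (1 - 2 * x * Complex.I) ^ ((1 : ℂ) / 2)) := by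
        rw [mul_assoc]
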